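/- Let f be rank-one convex on B₁ ⊂ ℝ^(m×n), differentiable at x₀ ∈ B_{1/2} with f(x₀) = 0 and Df(x₀) = 0, and suppose f(x) ≤ (A/2)|x − x₀|² on B₁ for some A ≥ 0. Then there exists C = C(n) such that |Df(x) − Df(x₀)| ≤ C·A·|x − x₀| for all x with |x − x₀| < 1/4 at which f is differentiable. -/

import Mathlib

open Metric MeasureTheory Set

noncomputable section

/-- The space of m×n real matrices with the Frobenius (Euclidean) norm. -/
abbrev Mat (m n : ℕ) := EuclideanSpace ℝ (Fin m × Fin n)

/-- The rank-one matrix a ⊗ b with entries aᵢbⱼ. -/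
def tensor {m n : ℕ} (a : EuclideanSpace ℝ (Fin m)) (b : EuclideanSpace ℝ (Fin n)) : Mat m n :=
  WithLp.toLp 2 (fun p : Fin m × Fin n => a p.1 * b p.2)

def IsRankOne {m n : ℕ} (M : Mat m n) : Prop := ∃ a b, M = tensor a b

/-- f is rank-one convex on U: f is convex along every rank-one segment contained in U. -/
def RankOneConvexOn {m n : ℕ} (U : Set (Mat m n)) (f : Mat m n → ℝ) : Prop :=
  ∀ x y, x ∈ U → y ∈ U → segment ℝ x y ⊆ U → IsRankOne (y - x) →
    ∀ t ∈ Icc (0:ℝ) 1, f ((1 - t) • x + t • y) ≤ (1 - t) * f x + t * f y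

open Filter Topology

lemma enorm_le_of_abs_le {ι : Type*} [Fintype ι] (u v : EuclideanSpace ℝ ι)
    (h : ∀ i, |u i| ≤ |v i|) : ‖u‖ ≤ ‖v‖ := by
  rw [EuclideanSpace.norm_eq, EuclideanSpace.norm_eq]
  apply Real.sqrt_le_sqrt
  apply Finset.sum_le_sum
  intro i _
  have := h i
  simp only [Real.norm_eq_abs]
  nlinarith [abs_nonneg (u i)]

lemma abs_apply_le_norm {ι : Type*} [Fintype ι] (u : EuclideanSpace ℝ ι) (p : ι) :
    |u p| ≤ ‖u‖ := by
  rw [EuclideanSpace.norm_eq]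
  have h1 : |u p| = Real.sqrt (‖u p‖^2) := by
    rw [Real.sqrt_sq_eq_abs, Real.norm_eq_abs, abs_abs]
  rw [h1]
  apply Real.sqrt_le_sqrt
  exact Finset.single_le_sum (f := fun i => ‖u i‖^2) (fun i _ => by positivity) (Finset.mem_univ p)

lemma isRankOne_smul {m n : ℕ} {M : Mat m n} (c : ℝ) (h : IsRankOne M) : IsRankOne (c • M) := by
  obtain ⟨a, b, rfl⟩ := h
  exact ⟨c • a, b, by ext p; simp [tensor, PiLp.smul_apply]; ring⟩

lemma single_isRankOne {m n : ℕ} (p : Fin m × Fin n) :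
    IsRankOne (EuclideanSpace.single p (1:ℝ) : Mat m n) := by
  refine ⟨EuclideanSpace.single p.1 1, EuclideanSpace.single p.2 1, ?_⟩
  ext q
  simp [tensor, EuclideanSpace.single_apply, Prod.ext_iff]
  split_ifs with h1 h2 h3 <;> simp_all

lemma decomp {m n : ℕ} (M : Mat m n) :
    M = ∑ p : Fin m × Fin n, M p • (EuclideanSpace.single p (1:ℝ) : Mat m n) := by
  ext q
  rw [WithLp.ofLp_sum, Finset.sum_apply]
  simp [EuclideanSpace.single_apply]

lemma midpt {m n : ℕ} {f : Mat m n → ℝ} (hf : RankOneConvexOn (ball 0 1) f) {u v : Mat m n}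
    (hu : u ∈ ball (0:Mat m n) 1) (hv : v ∈ ball (0:Mat m n) 1) (hr : IsRankOne (v - u)) :
    f ((1/2 : ℝ) • u + (1/2 : ℝ) • v) ≤ (1/2) * f u + (1/2) * f v := by
  have := hf u v hu hv ((convex_ball (0:Mat m n) 1).segment_subset hu hv) hr (1/2) (by norm_num)
  norm_num at this ⊢
  linarith

lemma lower_bound {m n : ℕ} {f : Mat m n → ℝ} {x₀ : Mat m n}
    (hf : RankOneConvexOn (ball 0 1) f)
    (hx₀ : x₀ ∈ ball (0:Mat m n) (1/2)) (hf0 : f x₀ = 0) {A : ℝ} (hA : 0 ≤ A)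
    (hub : ∀ x ∈ ball (0:Mat m n) 1, f x ≤ (A/2) * ‖x - x₀‖^2)
    (x : Mat m n) (hx : ‖x - x₀‖ < 1/4) :
    -(2^m * A * ‖x - x₀‖^2) ≤ f x := by
  set h : Mat m n := x - x₀ with hh
  set t : ℝ := ‖x - x₀‖ with htdef
  have ht0 : 0 ≤ t := norm_nonneg _
  have hx₀n : ‖x₀‖ < 1/2 := by simpa [mem_ball, dist_eq_norm] using hx₀
  set S : ℕ → Mat m n := fun k => (WithLp.toLp 2 (fun p => if (p.1:ℕ) < k then h p else 0) : Mat m n) with hS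
  have hS0 : S 0 = 0 := by ext p; simp [hS]
  have hSm : S m = h := by
    ext p; simp only [hS, PiLp.toLp_apply]; rw [if_pos p.1.isLt]
  have hSnorm : ∀ k, ‖S k‖ ≤ t := by
    intro k
    have : ‖S k‖ ≤ ‖h‖ := by
      apply enorm_le_of_abs_le
      intro p
      simp only [hS, PiLp.toLp_apply]
      split_ifs <;> simp [abs_nonneg]
    simpa [htdef, hh] using this
  have hUnorm : ∀ k, ‖(2:ℝ) • S k - S (k+1)‖ ≤ t := by
    intro k
    have : ‖(2:ℝ) • S k - S (k+1)‖ ≤ ‖h‖ := by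
      apply enorm_le_of_abs_le
      intro p
      simp only [hS, PiLp.sub_apply, PiLp.smul_apply, smul_eq_mul, PiLp.toLp_apply]
      split_ifs
      any_goals (exfalso; omega)
      all_goals (rw [abs_le]; constructor <;> linarith [le_abs_self (h p), neg_abs_le (h p)])
    simpa [htdef, hh] using this
  have hrk : ∀ k, IsRankOne ((2:ℝ) • (S (k+1) - S k)) := by
    intro k
    apply isRankOne_smul
    have hdiff : (S (k+1) - S k : Mat m n) = WithLp.toLp 2 (fun p => if (p.1:ℕ) = k then h p else 0) := by
      ext p
      simp only [hS, PiLp.sub_apply, PiLp.toLp_apply]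
      split_ifs
      any_goals (exfalso; omega)
      all_goals ring
    by_cases hk : k < m
    · refine ⟨EuclideanSpace.single ⟨k, hk⟩ 1, WithLp.toLp 2 (fun j => h (⟨k, hk⟩, j)), ?_⟩
      rw [hdiff]
      ext p
      obtain ⟨p1, p2⟩ := p
      simp only [tensor, EuclideanSpace.single_apply, PiLp.toLp_apply]
      by_cases hp : (p1:ℕ) = k
      · have hp1 : p1 = ⟨k, hk⟩ := Fin.ext hp
        subst hp1
        simp
      · have : p1 ≠ ⟨k, hk⟩ := by intro h'; exact hp (by rw [h'])
        simp [hp, this]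
    · have : (S (k+1) - S k : Mat m n) = 0 := by
        rw [hdiff]; ext p
        have : (p.1:ℕ) ≠ k := by omega
        simp [this]
      rw [this]
      exact ⟨0, 0, by ext p; simp [tensor]⟩
  have key : ∀ k, -(((2:ℝ)^k - 1) * (A/2) * t^2) ≤ f (x₀ + S k) := by
    intro k
    induction k with
    | zero => simp [hS0, hf0]
    | succ k ih =>
      set u : Mat m n := x₀ + ((2:ℝ) • S k - S (k+1)) with hu
      set v : Mat m n := x₀ + S (k+1) with hv
      have hmid : (1/2 : ℝ) • u + (1/2 : ℝ) • v = x₀ + S k := by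
        rw [hu, hv]; module
      have hvu : v - u = (2:ℝ) • (S (k+1) - S k) := by
        rw [hu, hv]; module
      have hub' : ‖u‖ < 1 := by
        calc ‖u‖ ≤ ‖x₀‖ + ‖(2:ℝ) • S k - S (k+1)‖ := norm_add_le _ _
        _ < 1/2 + 1/4 := by
            have := hUnorm k
            linarith
        _ < 1 := by norm_num
      have hvb : ‖v‖ < 1 := by
        calc ‖v‖ ≤ ‖x₀‖ + ‖S (k+1)‖ := norm_add_le _ _
        _ < 1/2 + 1/4 := by have := hSnorm (k+1); linarith
        _ < 1 := by norm_num
      have hmem_u : u ∈ ball (0:Mat m n) 1 := by simpa [mem_ball, dist_eq_norm] using hub'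
      have hmem_v : v ∈ ball (0:Mat m n) 1 := by simpa [mem_ball, dist_eq_norm] using hvb
      have hmi := midpt hf hmem_u hmem_v (hvu ▸ hrk k)
      rw [hmid] at hmi
      have hfu : f u ≤ (A/2) * t^2 := by
        have h1 := hub u hmem_u
        have h2 : ‖u - x₀‖ ≤ t := by
          have : u - x₀ = (2:ℝ) • S k - S (k+1) := by rw [hu]; module
          rw [this]; exact hUnorm k
        calc f u ≤ (A/2) * ‖u - x₀‖^2 := h1
        _ ≤ (A/2) * t^2 := by
            apply mul_le_mul_of_nonneg_left _ (by linarith)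
            nlinarith [norm_nonneg (u - x₀)]
      rw [pow_succ]
      linarith [hmi, ih, hfu]
  have := key m
  rw [hSm] at this
  have hxeq : x₀ + h = x := by rw [hh]; module
  rw [hxeq] at this
  have h2m : (1:ℝ) ≤ 2^m := one_le_pow₀ (by norm_num)
  nlinarith [this, mul_nonneg hA (sq_nonneg t)]

lemma dir_bound {m n : ℕ} {f : Mat m n → ℝ} {x₀ x : Mat m n} {L : Mat m n →L[ℝ] ℝ}
    (hf : RankOneConvexOn (ball 0 1) f)
    (hx₀ : x₀ ∈ ball (0:Mat m n) (1/2)) {A t : ℝ} (hA : 0 ≤ A)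
    (htdef : t = ‖x - x₀‖) (ht0 : 0 < t) (hxlt : t < 1/4)
    (hlow : -(2^m * A * t^2) ≤ f x)
    (hub : ∀ y ∈ ball (0:Mat m n) 1, f y ≤ (A/2) * ‖y - x₀‖^2)
    (hL : HasFDerivAt f L x) (M : Mat m n) (hM : IsRankOne M) (hM1 : ‖M‖ ≤ 1) :
    L M ≤ (2^m + 2) * A * t := by
  have hx₀n : ‖x₀‖ < 1/2 := by simpa [mem_ball, dist_eq_norm] using hx₀
  have hxn : ‖x - x₀‖ < 1/4 := htdef ▸ hxlt
  set g : ℝ → ℝ := fun s => f (x + s • M) with hg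
  have hline : HasDerivAt (fun s : ℝ => x + s • M) M 0 := by
    have h1 : HasDerivAt (fun s : ℝ => s • M) ((1:ℝ) • M) 0 := (hasDerivAt_id (0:ℝ)).smul_const M
    simpa using h1.const_add x
  have hgd : HasDerivAt g (L M) 0 := by
    have h0 : HasFDerivAt f L (x + (0:ℝ) • M) := by simpa using hL
    exact h0.comp_hasDerivAt 0 hline
  have hxmem : x ∈ ball (0:Mat m n) 1 := by
    rw [mem_ball, dist_eq_norm, sub_zero]
    calc ‖x‖ = ‖x₀ + (x - x₀)‖ := by rw [add_sub_cancel]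
    _ ≤ ‖x₀‖ + ‖x - x₀‖ := norm_add_le _ _
    _ < 1 := by linarith
  have hymem : x + t • M ∈ ball (0:Mat m n) 1 := by
    rw [mem_ball, dist_eq_norm, sub_zero]
    calc ‖x + t • M‖ = ‖x₀ + ((x - x₀) + t • M)‖ := by rw [← add_assoc, add_sub_cancel]
    _ ≤ ‖x₀‖ + (‖x - x₀‖ + ‖t • M‖) := le_trans (norm_add_le _ _) (by gcongr; exact norm_add_le _ _)
    _ ≤ ‖x₀‖ + (‖x - x₀‖ + t) := by
        gcongr
        rw [norm_smul, Real.norm_eq_abs, abs_of_pos ht0]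
        nlinarith
    _ < 1 := by linarith
  have hslope : ∀ u ∈ Ioc (0:ℝ) t, (g u - g 0) / u ≤ (g t - g 0) / t := by
    intro u hu
    obtain ⟨hu0, hut⟩ := hu
    have hrk : IsRankOne ((x + t • M) - x) := by
      have : (x + t • M) - x = t • M := by module
      rw [this]; exact isRankOne_smul t hM
    have hseg := (convex_ball (0:Mat m n) 1).segment_subset hxmem hymem
    have hcv := hf x (x + t • M) hxmem hymem hseg hrk (u/t)
      ⟨by positivity, by rw [div_le_one ht0]; exact hut⟩
    have hpt : (1 - u/t) • x + (u/t) • (x + t • M) = x + u • M := by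
      have hts : (u/t) • (t • M) = u • M := by
        rw [smul_smul, div_mul_cancel₀ _ (ne_of_gt ht0)]
      rw [smul_add, hts]; module
    rw [hpt] at hcv
    have : g u ≤ (1 - u/t) * g 0 + (u/t) * g t := by
      simpa [hg] using hcv
    rw [div_le_div_iff₀ hu0 ht0]
    have h3 : g u - g 0 ≤ (u/t) * (g t - g 0) := by linarith [this]
    calc (g u - g 0) * t ≤ ((u/t) * (g t - g 0)) * t := by nlinarith
    _ = (g t - g 0) * u := by field_simp
  have hLle : L M ≤ (g t - g 0) / t := by
    have htend : Tendsto (fun u => (g u - g 0) / u) (𝓝[>] (0:ℝ)) (𝓝 (L M)) := by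
      have := hasDerivAt_iff_tendsto_slope.mp hgd
      have h2 : Tendsto (slope g 0) (𝓝[>] (0:ℝ)) (𝓝 (L M)) :=
        this.mono_left (nhdsWithin_mono _ (fun u hu => ne_of_gt hu))
      refine h2.congr' ?_
      filter_upwards [self_mem_nhdsWithin] with u hu
      simp [slope_def_field, div_eq_inv_mul]
    apply le_of_tendsto htend
    filter_upwards [Ioc_mem_nhdsGT_of_mem ⟨le_refl (0:ℝ), ht0⟩] with u hu
    exact hslope u hu
  have hgt : g t ≤ 2 * A * t^2 := by
    have h1 := hub (x + t • M) hymem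
    have h2 : ‖x + t • M - x₀‖ ≤ 2 * t := by
      calc ‖x + t • M - x₀‖ = ‖(x - x₀) + t • M‖ := by rw [add_sub_right_comm]
      _ ≤ ‖x - x₀‖ + ‖t • M‖ := norm_add_le _ _
      _ ≤ t + t := by
          gcongr
          · exact le_of_eq htdef.symm
          · rw [norm_smul, Real.norm_eq_abs, abs_of_pos ht0]; nlinarith
      _ = 2 * t := by ring
    calc g t ≤ (A/2) * ‖x + t • M - x₀‖^2 := h1
    _ ≤ (A/2) * (2*t)^2 := by
        apply mul_le_mul_of_nonneg_left _ (by linarith)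
        nlinarith [norm_nonneg (x + t • M - x₀)]
    _ = 2 * A * t^2 := by ring
  have hg0 : -(2^m * A * t^2) ≤ g 0 := by simpa [hg] using hlow
  calc L M ≤ (g t - g 0) / t := hLle
  _ ≤ (2 * A * t^2 + 2^m * A * t^2) / t := by
      gcongr
      linarith [hgt, hg0]
  _ = (2^m + 2) * A * t := by field_simp; ring

/-- If a rank-one convex function with f(x₀)=0, Df(x₀)=0 is bounded above by a
paraboloid of opening A, then its gradient grows at most like C·A·|x−x₀|. -/
theorem stmt10 {m n : ℕ} : ∃ C : ℝ, 0 < C ∧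
    ∀ (f : Mat m n → ℝ) (x₀ : Mat m n), RankOneConvexOn (ball 0 1) f →
      x₀ ∈ ball (0 : Mat m n) (1/2) → f x₀ = 0 →
      HasFDerivAt f (0 : Mat m n →L[ℝ] ℝ) x₀ →
      ∀ A : ℝ, 0 ≤ A → (∀ x ∈ ball (0 : Mat m n) 1, f x ≤ (A/2) * ‖x - x₀‖^2) →
      ∀ x : Mat m n, ‖x - x₀‖ < 1/4 →
        ∀ L : Mat m n →L[ℝ] ℝ, HasFDerivAt f L x →
          ‖L - (0 : Mat m n →L[ℝ] ℝ)‖ ≤ C * A * ‖x - x₀‖ := by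
  refine ⟨((m*n : ℝ) + 1) * (2^m + 2), by positivity, ?_⟩
  intro f x₀ hf hx₀ hf0 hdf A hA hub x hx L hL
  set C : ℝ := ((m*n : ℝ) + 1) * (2^m + 2) with hC
  set t : ℝ := ‖x - x₀‖ with htdef
  rw [sub_zero]
  rcases eq_or_lt_of_le (norm_nonneg (x - x₀)) with h0 | ht0
  · -- x = x₀
    have hxx : x = x₀ := by
      have : x - x₀ = 0 := by
        rw [← norm_eq_zero]; exact h0.symm
      rw [sub_eq_zero] at this; exact this
    subst hxx
    have : L = 0 := hL.unique hdf
    rw [this, norm_zero]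
    positivity
  · have ht0' : (0:ℝ) < t := ht0
    have hlow := lower_bound hf hx₀ hf0 hA hub x hx
    have hd : ∀ p : Fin m × Fin n, |L (EuclideanSpace.single p (1:ℝ))| ≤ (2^m + 2) * A * t := by
      intro p
      have hnorm : ‖(EuclideanSpace.single p (1:ℝ) : Mat m n)‖ ≤ 1 := by
        rw [EuclideanSpace.norm_single]; simp
      have h1 := dir_bound hf hx₀ hA htdef ht0' hx hlow hub hL
        (EuclideanSpace.single p (1:ℝ)) (single_isRankOne p) hnorm
      have h2 := dir_bound hf hx₀ hA htdef ht0' hx hlow hub hL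
        (-(EuclideanSpace.single p (1:ℝ))) ?_ ?_
      · rw [abs_le]
        constructor
        · have : L (-(EuclideanSpace.single p (1:ℝ))) = -(L (EuclideanSpace.single p 1)) :=
            map_neg L _
          rw [this] at h2
          linarith
        · exact h1
      · have : -(EuclideanSpace.single p (1:ℝ) : Mat m n) =
            (-1 : ℝ) • (EuclideanSpace.single p (1:ℝ) : Mat m n) := by module
        rw [this]; exact isRankOne_smul _ (single_isRankOne p)
      · rw [norm_neg]; exact hnorm
    have hbound : ∀ M : Mat m n, ‖L M‖ ≤ (C * A * t) * ‖M‖ := by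
      intro M
      have hrepr : L M = ∑ p : Fin m × Fin n, M p * L (EuclideanSpace.single p (1:ℝ)) := by
        conv_lhs => rw [decomp M]
        rw [map_sum]
        congr 1
        funext p
        rw [L.map_smul, smul_eq_mul]
      rw [Real.norm_eq_abs, hrepr]
      calc |∑ p : Fin m × Fin n, M p * L (EuclideanSpace.single p (1:ℝ))|
          ≤ ∑ p : Fin m × Fin n, |M p * L (EuclideanSpace.single p (1:ℝ))| :=
            Finset.abs_sum_le_sum_abs _ _
      _ ≤ ∑ _p : Fin m × Fin n, ‖M‖ * ((2^m + 2) * A * t) := by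
          apply Finset.sum_le_sum
          intro p _
          rw [abs_mul]
          have h1 : |M p| ≤ ‖M‖ := abs_apply_le_norm M p
          have h2 := hd p
          have h3 : (0:ℝ) ≤ |M p| := abs_nonneg _
          nlinarith [abs_nonneg (L (EuclideanSpace.single p (1:ℝ))), norm_nonneg M]
      _ = (m*n : ℝ) * (‖M‖ * ((2^m + 2) * A * t)) := by
          rw [Finset.sum_const, Finset.card_univ]
          simp [Fintype.card_prod, nsmul_eq_mul]
      _ ≤ (C * A * t) * ‖M‖ := by
          rw [hC]
          have hMn : (0:ℝ) ≤ ‖M‖ := norm_nonneg _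
          have hmn : (0:ℝ) ≤ (m*n : ℝ) := by positivity
          have h2m : (0:ℝ) < 2^m + 2 := by positivity
          nlinarith [mul_nonneg (mul_nonneg hA (le_of_lt ht0')) hMn,
            mul_nonneg (mul_nonneg (mul_nonneg hmn hA) (le_of_lt ht0')) hMn]
    apply ContinuousLinearMap.opNorm_le_bound
    · positivity
    · intro M
      exact hbound M
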